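/- Suppose that for each feasible solution x̄ of BP there exists a feasible ȳ of BP with x̄ + ȳ ≤ e. If a^T x ≤ a₀ defines a facet of P_BP, then (a ⊕ 0 ⊕ 0)^T(x ⊕ y ⊕ z) ≤ a₀ and (0 ⊕ a ⊕ 0)^T(x ⊕ y ⊕ z) ≤ a₀ each define a facet of the diameter polytope P_BPD'. -/

import Mathlib

open Matrix Finset

def BinaryVec {n : ℕ} (x : Fin n → ℝ) : Prop := ∀ i, x i = 0 ∨ x i = 1

/-- Feasibility for BP: `Ax ≤ b`, `x ∈ {0,1}ⁿ`. -/
def FeasBP {n m : ℕ} (A : Matrix (Fin m) (Fin n) ℝ) (b : Fin m → ℝ)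
    (x : Fin n → ℝ) : Prop :=
  BinaryVec x ∧ A.mulVec x ≤ b

/-- Feasibility for BPD' : `Ax ≤ b`, `Ay ≤ b`, `x + y - z ≤ e`, `x, y, z ∈ {0,1}ⁿ`. -/
def FeasBPD' {n m : ℕ} (A : Matrix (Fin m) (Fin n) ℝ) (b : Fin m → ℝ)
    (x y z : Fin n → ℝ) : Prop :=
  FeasBP A b x ∧ FeasBP A b y ∧ BinaryVec z ∧ (∀ i, x i + y i - z i ≤ 1)

/-- The polytope underlying BP: the convex hull of its feasible set. -/
def polyBP {n m : ℕ} (A : Matrix (Fin m) (Fin n) ℝ) (b : Fin m → ℝ) :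
    Set (Fin n → ℝ) :=
  convexHull ℝ {x | FeasBP A b x}

/-- The diameter polytope `P_BPD'` in `ℝⁿ × ℝⁿ × ℝⁿ ≅ ℝ^{3n}`. -/
def polyBPD' {n m : ℕ} (A : Matrix (Fin m) (Fin n) ℝ) (b : Fin m → ℝ) :
    Set ((Fin n → ℝ) × (Fin n → ℝ) × (Fin n → ℝ)) :=
  convexHull ℝ {p | FeasBPD' A b p.1 p.2.1 p.2.2}

/-- The dimension of a polytope: the dimension of its affine hull. -/
noncomputable def polyDim {V : Type*} [AddCommGroup V] [Module ℝ V]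
    (P : Set V) : ℕ :=
  Module.finrank ℝ (affineSpan ℝ P).direction

/-- `f p ≤ a₀` is a facet-defining inequality of `P`: it is valid on `P` and the
face it defines is nonempty of dimension `dim P - 1`. -/
noncomputable def IsFacet {V : Type*} [AddCommGroup V] [Module ℝ V]
    (P : Set V) (f : V → ℝ) (a₀ : ℝ) : Prop :=
  (∀ p ∈ P, f p ≤ a₀) ∧ ({p ∈ P | f p = a₀}).Nonempty ∧
    polyDim {p ∈ P | f p = a₀} + 1 = polyDim P

/-! ### Auxiliary material -/

/-- Equivalence between `p.prod q` and `p × q`. -/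
def myProdEquiv {R M N : Type*} [Ring R] [AddCommGroup M] [AddCommGroup N]
    [Module R M] [Module R N] (p : Submodule R M) (q : Submodule R N) :
    (p.prod q) ≃ₗ[R] p × q where
  toFun v := (⟨v.1.1, v.2.1⟩, ⟨v.1.2, v.2.2⟩)
  invFun x := ⟨(x.1.1, x.2.1), x.1.2, x.2.2⟩
  map_add' _ _ := rfl
  map_smul' _ _ := rfl
  left_inv _ := rfl
  right_inv _ := rfl

lemma finrank_sub_prod {M N : Type*} [AddCommGroup M] [AddCommGroup N]
    [Module ℝ M] [Module ℝ N] [FiniteDimensional ℝ M] [FiniteDimensional ℝ N]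
    (p : Submodule ℝ M) (q : Submodule ℝ N) :
    Module.finrank ℝ (p.prod q) = Module.finrank ℝ p + Module.finrank ℝ q := by
  rw [(myProdEquiv p q).finrank_eq, Module.finrank_prod]

lemma polyDim_hull {V : Type*} [AddCommGroup V] [Module ℝ V] (X : Set V) :
    polyDim (convexHull ℝ X) = Module.finrank ℝ (vectorSpan ℝ X) := by
  unfold polyDim
  rw [affineSpan_convexHull, direction_affineSpan]

/-- The face of a convex hull cut out by a valid linear inequality is the hull
of the points of the original set lying on the hyperplane. -/
lemma face_hull {V : Type*} [AddCommGroup V] [Module ℝ V] (S : Set V)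
    (f : V →ₗ[ℝ] ℝ) (a₀ : ℝ) (hv : ∀ s ∈ S, f s ≤ a₀) :
    {p ∈ convexHull ℝ S | f p = a₀} = convexHull ℝ {s ∈ S | f s = a₀} := by
  apply Set.Subset.antisymm
  · rintro p ⟨hp, hfp⟩
    rw [_root_.convexHull_eq] at hp
    obtain ⟨ι, t, w, z, hw0, hw1, hzS, hcm⟩ := hp
    classical
    have hsum : ∑ i ∈ t, w i * f (z i) = a₀ := by
      have := congrArg f hcm
      rw [Finset.centerMass_eq_of_sum_1 t z hw1, map_sum] at this
      simp only [_root_.map_smul, smul_eq_mul] at this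
      rw [hfp] at this
      exact this
    have hterm : ∀ i ∈ t, w i * (a₀ - f (z i)) = 0 := by
      rw [← Finset.sum_eq_zero_iff_of_nonneg]
      · have : ∑ i ∈ t, w i * (a₀ - f (z i)) =
            (∑ i ∈ t, w i) * a₀ - ∑ i ∈ t, w i * f (z i) := by
          rw [Finset.sum_mul, ← Finset.sum_sub_distrib]
          exact Finset.sum_congr rfl fun i _ => by ring
        rw [this, hw1, hsum]; ring
      · intro i hi
        exact mul_nonneg (hw0 i hi) (sub_nonneg.2 (hv _ (hzS i hi)))
    rw [← Finset.centerMass_filter_ne_zero z] at hcm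
    rw [← hcm]
    apply Finset.centerMass_mem_convexHull
    · intro i hi; exact hw0 i (Finset.mem_filter.1 hi).1
    · rw [Finset.sum_filter_ne_zero, hw1]; norm_num
    · intro i hi
      obtain ⟨hit, hwne⟩ := Finset.mem_filter.1 hi
      refine ⟨hzS i hit, ?_⟩
      have := hterm i hit
      rcases mul_eq_zero.1 this with h | h
      · exact absurd h hwne
      · linarith [sub_eq_zero.1 h]
  · intro p hp
    constructor
    · exact convexHull_mono (Set.sep_subset _ _) hp
    · have : convexHull ℝ {s ∈ S | f s = a₀} ⊆ {w | f w = a₀} :=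
        convexHull_min (fun s hs => hs.2) (convex_hyperplane f.isLinear a₀)
      exact this hp

/-- The linear functional `x ↦ ∑ i, a i * x i`. -/
def sumMulLin {n : ℕ} (a : Fin n → ℝ) : (Fin n → ℝ) →ₗ[ℝ] ℝ where
  toFun x := ∑ i, a i * x i
  map_add' x y := by
    simp [mul_add, Finset.sum_add_distrib]
  map_smul' c x := by
    simp only [Pi.smul_apply, smul_eq_mul, RingHom.id_apply, Finset.mul_sum]
    exact Finset.sum_congr rfl fun i _ => by ring

section Key

variable {n m : ℕ} (A : Matrix (Fin m) (Fin n) ℝ) (b : Fin m → ℝ)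

/-- The "fixing" z-vector. -/
noncomputable def zfix (x y : Fin n → ℝ) : Fin n → ℝ :=
  fun i => if x i + y i ≤ 1 then 0 else 1

lemma feas_zfix {x y : Fin n → ℝ} (hx : FeasBP A b x) (hy : FeasBP A b y) :
    FeasBPD' A b x y (zfix x y) := by
  refine ⟨hx, hy, ?_, ?_⟩
  · intro i; unfold zfix; split <;> simp
  · intro i; unfold zfix; split
    · simpa using ‹x i + y i ≤ 1›
    · have h1 : x i ≤ 1 := by rcases hx.1 i with h | h <;> simp [h]
      have h2 : y i ≤ 1 := by rcases hy.1 i with h | h <;> simp [h]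
      linarith

lemma feas_small {x y : Fin n → ℝ} (hx : FeasBP A b x) (hy : FeasBP A b y)
    (hxy : ∀ i, x i + y i ≤ 1) {z : Fin n → ℝ} (hz : BinaryVec z) :
    FeasBPD' A b x y z := by
  refine ⟨hx, hy, hz, fun i => ?_⟩
  have : 0 ≤ z i := by rcases hz i with h | h <;> simp [h]
  linarith [hxy i]

/-- Key vector span computation. -/
lemma vspan_key (C₁ C₂ : Set (Fin n → ℝ))
    (h₁ : ∀ x ∈ C₁, FeasBP A b x) (h₂ : ∀ y ∈ C₂, FeasBP A b y)
    (hkey : ∃ x₀ ∈ C₁, ∃ y₀ ∈ C₂, ∀ i, x₀ i + y₀ i ≤ 1) :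
    vectorSpan ℝ {p : (Fin n → ℝ) × (Fin n → ℝ) × (Fin n → ℝ) |
        FeasBPD' A b p.1 p.2.1 p.2.2 ∧ p.1 ∈ C₁ ∧ p.2.1 ∈ C₂} =
      (vectorSpan ℝ C₁).prod ((vectorSpan ℝ C₂).prod ⊤) := by
  classical
  obtain ⟨x₀, hx₀, y₀, hy₀, hxy₀⟩ := hkey
  set W : Set ((Fin n → ℝ) × (Fin n → ℝ) × (Fin n → ℝ)) :=
    {p | FeasBPD' A b p.1 p.2.1 p.2.2 ∧ p.1 ∈ C₁ ∧ p.2.1 ∈ C₂} with hW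
  apply le_antisymm
  · rw [vectorSpan, Submodule.span_le]
    rintro v ⟨p, hp, q, hq, rfl⟩
    refine Submodule.mem_prod.2 ⟨?_, Submodule.mem_prod.2 ⟨?_, trivial⟩⟩
    · exact vsub_mem_vectorSpan ℝ hp.2.1 hq.2.1
    · exact vsub_mem_vectorSpan ℝ hp.2.2 hq.2.2
  · -- third component
    have h3 : ∀ w : Fin n → ℝ, ((0 : Fin n → ℝ), (0 : Fin n → ℝ), w) ∈ vectorSpan ℝ W := by
      intro w
      have hmem : ∀ z : Fin n → ℝ, BinaryVec z → (x₀, y₀, z) ∈ W := by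
        intro z hz
        exact ⟨feas_small A b (h₁ _ hx₀) (h₂ _ hy₀) hxy₀ hz, hx₀, hy₀⟩
      -- the set of w with (0,0,w) ∈ vectorSpan W is a submodule (comap)
      let L : (Fin n → ℝ) →ₗ[ℝ] (Fin n → ℝ) × (Fin n → ℝ) × (Fin n → ℝ) :=
        (LinearMap.inr ℝ _ _).comp (LinearMap.inr ℝ _ _)
      have : w ∈ (vectorSpan ℝ W).comap L := by
        have htop : (⊤ : Submodule ℝ (Fin n → ℝ)) ≤ (vectorSpan ℝ W).comap L := by
          rw [← (Pi.basisFun ℝ (Fin n)).span_eq, Submodule.span_le]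
          rintro v ⟨i, rfl⟩
          have hb : BinaryVec (Pi.basisFun ℝ (Fin n) i) := by
            intro j
            by_cases h : j = i <;> simp [Pi.basisFun_apply, Pi.single_apply, h]
          have h0 : BinaryVec (0 : Fin n → ℝ) := fun j => Or.inl rfl
          have := vsub_mem_vectorSpan ℝ (hmem _ hb) (hmem _ h0)
          simpa [L, Prod.ext_iff] using this
        exact htop trivial
      simpa [L] using this
    -- first component
    have h1 : ∀ u ∈ vectorSpan ℝ C₁,
        ((u : Fin n → ℝ), (0 : Fin n → ℝ), (0 : Fin n → ℝ)) ∈ vectorSpan ℝ W := by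
      intro u hu
      let L : (Fin n → ℝ) →ₗ[ℝ] (Fin n → ℝ) × (Fin n → ℝ) × (Fin n → ℝ) :=
        LinearMap.inl ℝ _ _
      have hle : vectorSpan ℝ C₁ ≤ (vectorSpan ℝ W).comap L := by
        rw [vectorSpan, Submodule.span_le]
        rintro v ⟨x, hx, x', hx', rfl⟩
        have hp : (x, y₀, zfix x y₀) ∈ W :=
          ⟨feas_zfix A b (h₁ _ hx) (h₂ _ hy₀), hx, hy₀⟩
        have hq : (x', y₀, zfix x' y₀) ∈ W :=
          ⟨feas_zfix A b (h₁ _ hx') (h₂ _ hy₀), hx', hy₀⟩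
        have hd := vsub_mem_vectorSpan ℝ hp hq
        have h3' := h3 (zfix x y₀ - zfix x' y₀)
        have := Submodule.sub_mem _ hd h3'
        simpa [L, Prod.ext_iff, vsub_eq_sub] using this
      exact hle hu
    -- second component
    have h2' : ∀ v ∈ vectorSpan ℝ C₂,
        ((0 : Fin n → ℝ), (v : Fin n → ℝ), (0 : Fin n → ℝ)) ∈ vectorSpan ℝ W := by
      intro v hv
      let L : (Fin n → ℝ) →ₗ[ℝ] (Fin n → ℝ) × (Fin n → ℝ) × (Fin n → ℝ) :=
        (LinearMap.inr ℝ _ _).comp (LinearMap.inl ℝ _ _)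
      have hle : vectorSpan ℝ C₂ ≤ (vectorSpan ℝ W).comap L := by
        rw [vectorSpan, Submodule.span_le]
        rintro w ⟨y, hy, y', hy', rfl⟩
        have hp : (x₀, y, zfix x₀ y) ∈ W :=
          ⟨feas_zfix A b (h₁ _ hx₀) (h₂ _ hy), hx₀, hy⟩
        have hq : (x₀, y', zfix x₀ y') ∈ W :=
          ⟨feas_zfix A b (h₁ _ hx₀) (h₂ _ hy'), hx₀, hy'⟩
        have hd := vsub_mem_vectorSpan ℝ hp hq
        have h3' := h3 (zfix x₀ y - zfix x₀ y')
        have := Submodule.sub_mem _ hd h3'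
        simpa [L, Prod.ext_iff, vsub_eq_sub] using this
      simpa [L] using hle hv
    rintro ⟨u, v, w⟩ hm
    obtain ⟨hu, hv, -⟩ : u ∈ vectorSpan ℝ C₁ ∧ v ∈ vectorSpan ℝ C₂ ∧ True := by
      rcases Submodule.mem_prod.1 hm with ⟨h1', h2''⟩
      rcases Submodule.mem_prod.1 h2'' with ⟨ha, hb'⟩
      exact ⟨h1', ha, trivial⟩
    have heq : (u, v, w) = (u, 0, 0) + (0, v, 0) + ((0 : Fin n → ℝ), (0 : Fin n → ℝ), w) := by
      simp [Prod.ext_iff]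
    rw [heq]
    exact Submodule.add_mem _ (Submodule.add_mem _ (h1 u hu) (h2' v hv)) (h3 w)

end Key

theorem stmt11 {n m : ℕ} (A : Matrix (Fin m) (Fin n) ℝ) (b : Fin m → ℝ)
    (hne : ∃ x, FeasBP A b x)
    (hcomp : ∀ x, FeasBP A b x → ∃ y, FeasBP A b y ∧ ∀ i, x i + y i ≤ 1)
    (a : Fin n → ℝ) (a₀ : ℝ)
    (hfacet : IsFacet (polyBP A b) (fun x => ∑ i, a i * x i) a₀) :
    IsFacet (polyBPD' A b) (fun p => ∑ i, a i * p.1 i) a₀ ∧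
    IsFacet (polyBPD' A b) (fun p => ∑ i, a i * p.2.1 i) a₀ := by
  classical
  set S : Set (Fin n → ℝ) := {x | FeasBP A b x} with hS
  set T : Set (Fin n → ℝ) := {x ∈ S | sumMulLin a x = a₀} with hT
  obtain ⟨hval, hfne, hdim⟩ := hfacet
  -- validity on S
  have hvalS : ∀ s ∈ S, sumMulLin a s ≤ a₀ := fun s hs =>
    hval s (subset_convexHull ℝ S hs)
  -- face of polyBP equals hull of T
  have hface : {p ∈ polyBP A b | (fun x => ∑ i, a i * x i) p = a₀} = convexHull ℝ T := by
    rw [hT]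
    exact face_hull S (sumMulLin a) a₀ hvalS
  -- T nonempty
  have hTne : T.Nonempty := by
    rw [← convexHull_nonempty_iff (𝕜 := ℝ), ← hface]
    exact hfne
  -- dimension fact for BP
  have hdim' : Module.finrank ℝ (vectorSpan ℝ T) + 1 = Module.finrank ℝ (vectorSpan ℝ S) := by
    have h1 : polyDim {p ∈ polyBP A b | (fun x => ∑ i, a i * x i) p = a₀} =
        Module.finrank ℝ (vectorSpan ℝ T) := by
      rw [hface]; exact polyDim_hull T
    have h2 : polyDim (polyBP A b) = Module.finrank ℝ (vectorSpan ℝ S) := polyDim_hull S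
    rw [h1, h2] at hdim
    exact hdim
  obtain ⟨xS, hxS⟩ := hne
  have hxS' : xS ∈ S := hxS
  -- the combined feasible set
  set W : Set ((Fin n → ℝ) × (Fin n → ℝ) × (Fin n → ℝ)) :=
    {p | FeasBPD' A b p.1 p.2.1 p.2.2} with hWdef
  have hWS : W = {p | FeasBPD' A b p.1 p.2.1 p.2.2 ∧ p.1 ∈ S ∧ p.2.1 ∈ S} := by
    ext p; constructor
    · intro hp; exact ⟨hp, hp.1, hp.2.1⟩
    · intro hp; exact hp.1
  have hSsub : ∀ x ∈ S, FeasBP A b x := fun x hx => hx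
  have hTsub : ∀ x ∈ T, FeasBP A b x := fun x hx => hx.1
  -- vector span of W
  have hvW : vectorSpan ℝ W = (vectorSpan ℝ S).prod ((vectorSpan ℝ S).prod ⊤) := by
    rw [hWS]
    apply vspan_key A b S S hSsub hSsub
    obtain ⟨y, hy, hxy⟩ := hcomp xS hxS
    exact ⟨xS, hxS', y, hy, hxy⟩
  -- dimension of polyBPD'
  have hfinW : polyDim (polyBPD' A b) =
      Module.finrank ℝ (vectorSpan ℝ S) + (Module.finrank ℝ (vectorSpan ℝ S) + n) := by
    have h1 : polyDim (polyBPD' A b) = Module.finrank ℝ (vectorSpan ℝ W) := polyDim_hull W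
    rw [h1, hvW, finrank_sub_prod, finrank_sub_prod, finrank_top, Module.finrank_fin_fun]
  -- first facet
  have facet1 : IsFacet (polyBPD' A b) (fun p => ∑ i, a i * p.1 i) a₀ := by
    set fx : ((Fin n → ℝ) × (Fin n → ℝ) × (Fin n → ℝ)) →ₗ[ℝ] ℝ :=
      (sumMulLin a).comp (LinearMap.fst ℝ _ _) with hfx
    have hfxval : ∀ p ∈ W, fx p ≤ a₀ := fun p hp => hvalS p.1 hp.1
    have hfaceW : {p ∈ polyBPD' A b | fx p = a₀} = convexHull ℝ {p ∈ W | fx p = a₀} :=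
      face_hull W fx a₀ hfxval
    have hFW : {p ∈ W | fx p = a₀} =
        {p | FeasBPD' A b p.1 p.2.1 p.2.2 ∧ p.1 ∈ T ∧ p.2.1 ∈ S} := by
      ext p; constructor
      · rintro ⟨hp, hfp⟩; exact ⟨hp, ⟨hp.1, hfp⟩, hp.2.1⟩
      · rintro ⟨hp, hpT, hpS⟩; exact ⟨hp, hpT.2⟩
    obtain ⟨xT, hxT⟩ := hTne
    obtain ⟨yT, hyT, hxyT⟩ := hcomp xT (hTsub xT hxT)
    refine ⟨?_, ?_, ?_⟩
    · -- validity on hull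
      intro p hp
      have : polyBPD' A b ⊆ {q | fx q ≤ a₀} :=
        convexHull_min hfxval (convex_halfSpace_le fx.isLinear a₀)
      exact this hp
    · -- nonempty
      refine ⟨(xT, yT, fun _ => 0), ?_, hxT.2⟩
      apply subset_convexHull ℝ W
      exact feas_small A b (hTsub xT hxT) hyT hxyT (fun j => Or.inl rfl)
    · -- dimension
      have hvF : vectorSpan ℝ {p ∈ W | fx p = a₀} =
          (vectorSpan ℝ T).prod ((vectorSpan ℝ S).prod ⊤) := by
        rw [hFW]
        exact vspan_key A b T S hTsub hSsub ⟨xT, hxT, yT, hyT, hxyT⟩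
      have hd1 : polyDim {p ∈ polyBPD' A b | fx p = a₀} =
          Module.finrank ℝ (vectorSpan ℝ T) + (Module.finrank ℝ (vectorSpan ℝ S) + n) := by
        rw [hfaceW, polyDim_hull, hvF,
          finrank_sub_prod, finrank_sub_prod, finrank_top, Module.finrank_fin_fun]
      have hbeta : {p ∈ polyBPD' A b | fx p = a₀} =
          {p ∈ polyBPD' A b |
            (fun p : (Fin n → ℝ) × (Fin n → ℝ) × (Fin n → ℝ) => ∑ i, a i * p.1 i) p = a₀} := rfl
      rw [← hbeta]
      rw [hd1]
      rw [hfinW]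
      rw [← hdim']
      ring
  -- second facet
  have facet2 : IsFacet (polyBPD' A b) (fun p => ∑ i, a i * p.2.1 i) a₀ := by
    set fy : ((Fin n → ℝ) × (Fin n → ℝ) × (Fin n → ℝ)) →ₗ[ℝ] ℝ :=
      (sumMulLin a).comp ((LinearMap.fst ℝ _ _).comp (LinearMap.snd ℝ _ _)) with hfy
    have hfyval : ∀ p ∈ W, fy p ≤ a₀ := fun p hp => hvalS p.2.1 hp.2.1
    have hfaceW : {p ∈ polyBPD' A b | fy p = a₀} = convexHull ℝ {p ∈ W | fy p = a₀} :=
      face_hull W fy a₀ hfyval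
    have hFW : {p ∈ W | fy p = a₀} =
        {p | FeasBPD' A b p.1 p.2.1 p.2.2 ∧ p.1 ∈ S ∧ p.2.1 ∈ T} := by
      ext p; constructor
      · rintro ⟨hp, hfp⟩; exact ⟨hp, hp.1, ⟨hp.2.1, hfp⟩⟩
      · rintro ⟨hp, hpS, hpT⟩; exact ⟨hp, hpT.2⟩
    obtain ⟨yT, hyT⟩ := hTne
    obtain ⟨xC, hxC, hxyC⟩ := hcomp yT (hTsub yT hyT)
    have hxyC' : ∀ i, xC i + yT i ≤ 1 := fun i => by linarith [hxyC i]
    refine ⟨?_, ?_, ?_⟩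
    · intro p hp
      have : polyBPD' A b ⊆ {q | fy q ≤ a₀} :=
        convexHull_min hfyval (convex_halfSpace_le fy.isLinear a₀)
      exact this hp
    · refine ⟨(xC, yT, fun _ => 0), ?_, hyT.2⟩
      apply subset_convexHull ℝ W
      exact feas_small A b hxC (hTsub yT hyT) hxyC' (fun j => Or.inl rfl)
    · have hvF : vectorSpan ℝ {p ∈ W | fy p = a₀} =
          (vectorSpan ℝ S).prod ((vectorSpan ℝ T).prod ⊤) := by
        rw [hFW]
        exact vspan_key A b S T hSsub hTsub ⟨xC, hxC, yT, hyT, hxyC'⟩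
      have hd1 : polyDim {p ∈ polyBPD' A b | fy p = a₀} =
          Module.finrank ℝ (vectorSpan ℝ S) + (Module.finrank ℝ (vectorSpan ℝ T) + n) := by
        rw [hfaceW, polyDim_hull, hvF,
          finrank_sub_prod, finrank_sub_prod, finrank_top, Module.finrank_fin_fun]
      have hbeta : {p ∈ polyBPD' A b | fy p = a₀} =
          {p ∈ polyBPD' A b |
            (fun p : (Fin n → ℝ) × (Fin n → ℝ) × (Fin n → ℝ) => ∑ i, a i * p.2.1 i) p = a₀} := rfl
      rw [← hbeta]
      rw [hd1]
      rw [hfinW]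
      rw [← hdim']
      ring
  exact ⟨facet1, facet2⟩
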